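/- arXiv:1701.03363 — 7 statements merged into one kernel-verified Lean document; each statement's English description precedes it below -/
import Mathlib

section
/- Let n > 2 be even. If a graph G on n vertices is the union of n/2 - 1 pairwise edge-disjoint perfect matchings and G is disconnected, then G is the disjoint union of two complete graphs each on n/2 vertices. -/
theorem stmt4 (n : ℕ) (hn : 2 < n) (heven : Even n)
    (M : Fin (n / 2 - 1) → SimpleGraph (Fin n))
    (hpm : ∀ i, ∀ v, ∃! w, (M i).Adj v w)
    (hdisj : Pairwise fun i j => Disjoint (M i) (M j))
    (G : SimpleGraph (Fin n)) (hG : G = ⨆ i, M i)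
    (hconn : ¬ G.Connected) :
    ∃ S : Finset (Fin n), S.card = n / 2 ∧
      ∀ u v : Fin n, u ≠ v → (G.Adj u v ↔ (u ∈ S ↔ v ∈ S)) := by
  classical
  have hadj : ∀ u v, G.Adj u v ↔ ∃ i, (M i).Adj u v := by
    intro u v; rw [hG]; exact SimpleGraph.iSup_adj
  -- degree of every vertex is n/2 - 1
  have hdeg : ∀ v : Fin n, (G.neighborFinset v).card = n / 2 - 1 := by
    intro v
    have himg : Finset.image (fun i => (hpm i v).choose) Finset.univ
        = G.neighborFinset v := by
      apply Finset.Subset.antisymm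
      · intro w hw
        simp only [Finset.mem_image] at hw
        obtain ⟨i, -, rfl⟩ := hw
        rw [SimpleGraph.mem_neighborFinset, hadj]
        exact ⟨i, (hpm i v).choose_spec.1⟩
      · intro w hw
        rw [SimpleGraph.mem_neighborFinset, hadj] at hw
        obtain ⟨i, hi⟩ := hw
        simp only [Finset.mem_image]
        exact ⟨i, Finset.mem_univ i, ((hpm i v).choose_spec.2 w hi).symm⟩
    have hinj : Function.Injective (fun i : Fin (n / 2 - 1) => (hpm i v).choose) := by
      intro i j hij
      by_contra hne
      have h1 : (M i).Adj v (hpm i v).choose := (hpm i v).choose_spec.1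
      have h2 : (M j).Adj v (hpm i v).choose := by
        have := (hpm j v).choose_spec.1
        simpa [← hij] using this
      have hb : M i ⊓ M j = ⊥ := disjoint_iff.mp (hdisj hne)
      have : (⊥ : SimpleGraph (Fin n)).Adj v (hpm i v).choose := by
        rw [← hb]; exact ⟨h1, h2⟩
      simp at this
    rw [← himg, Finset.card_image_of_injective _ hinj, Finset.card_univ,
      Fintype.card_fin]
  -- component finsets
  set C : Fin n → Finset (Fin n) :=
    fun v => Finset.univ.filter (fun w => G.Reachable v w) with hC
  have hmemC : ∀ v w, w ∈ C v ↔ G.Reachable v w := by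
    intro v w; simp [hC]
  have hsub : ∀ v, insert v (G.neighborFinset v) ⊆ C v := by
    intro v w hw
    rw [hmemC]
    rcases Finset.mem_insert.mp hw with rfl | h
    · exact SimpleGraph.Reachable.refl _
    · exact ((SimpleGraph.mem_neighborFinset _ _ _).mp h).reachable
  have hinsert : ∀ v : Fin n, (insert v (G.neighborFinset v)).card = n / 2 := by
    intro v
    rw [Finset.card_insert_of_notMem (by simp), hdeg]
    omega
  have hcardC : ∀ v, n / 2 ≤ (C v).card := by
    intro v
    calc n / 2 = (insert v (G.neighborFinset v)).card := (hinsert v).symm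
    _ ≤ (C v).card := Finset.card_le_card (hsub v)
  -- disconnected: two non-reachable vertices
  haveI : Nonempty (Fin n) := ⟨⟨0, by omega⟩⟩
  obtain ⟨u₀, v₀, hne0⟩ : ∃ u v : Fin n, ¬ G.Reachable u v := by
    by_contra h
    push_neg at h
    exact hconn ⟨h⟩
  have hCeq : ∀ a u : Fin n, G.Reachable a u → C u = C a := by
    intro a u hu
    ext w
    rw [hmemC, hmemC]
    exact ⟨fun h => hu.trans h, fun h => hu.symm.trans h⟩
  have hdisjC : ∀ a b : Fin n, ¬ G.Reachable a b → Disjoint (C a) (C b) := by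
    intro a b hab
    rw [Finset.disjoint_left]
    intro w hw1 hw2
    exact hab (((hmemC _ _).mp hw1).trans ((hmemC _ _).mp hw2).symm)
  have hn2 : n % 2 = 0 := Nat.even_iff.mp heven
  have hsum : (C u₀).card + (C v₀).card ≤ n := by
    have := Finset.card_le_univ (C u₀ ∪ C v₀)
    rw [Finset.card_union_of_disjoint (hdisjC u₀ v₀ hne0)] at this
    simpa using this
  have hcu0 : (C u₀).card = n / 2 := by
    have := hcardC u₀; have := hcardC v₀; omega
  have hcv0 : (C v₀).card = n / 2 := by
    have := hcardC u₀; have := hcardC v₀; omega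
  -- every vertex lies in C u₀ or C v₀
  have hcover : ∀ u : Fin n, u ∈ C u₀ ∨ u ∈ C v₀ := by
    intro u
    by_contra h
    push_neg at h
    obtain ⟨h1, h2⟩ := h
    have hr1 : ¬ G.Reachable u₀ u := fun hr => h1 ((hmemC _ _).mpr hr)
    have hr2 : ¬ G.Reachable v₀ u := fun hr => h2 ((hmemC _ _).mpr hr)
    have d1 : Disjoint (C u) (C u₀) := hdisjC u u₀ (fun h => hr1 h.symm)
    have d2 : Disjoint (C u) (C v₀) := hdisjC u v₀ (fun h => hr2 h.symm)
    have d3 : Disjoint (C u) (C u₀ ∪ C v₀) := by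
      rw [Finset.disjoint_union_right]; exact ⟨d1, d2⟩
    have hle := Finset.card_le_univ (C u ∪ (C u₀ ∪ C v₀))
    rw [Finset.card_union_of_disjoint d3,
      Finset.card_union_of_disjoint (hdisjC u₀ v₀ hne0)] at hle
    simp only [Finset.card_univ, Fintype.card_fin] at hle
    have := hcardC u
    omega
  have hcardC' : ∀ u : Fin n, (C u).card = n / 2 := by
    intro u
    rcases hcover u with h | h
    · rw [hCeq u₀ u ((hmemC _ _).mp h)]; exact hcu0
    · rw [hCeq v₀ u ((hmemC _ _).mp h)]; exact hcv0
  -- reachable distinct vertices are adjacent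
  have hkey : ∀ u v : Fin n, u ≠ v → G.Reachable u v → G.Adj u v := by
    intro u v hne hr
    have heq : insert u (G.neighborFinset u) = C u :=
      Finset.eq_of_subset_of_card_le (hsub u) (by rw [hcardC' u, hinsert u])
    have hv : v ∈ insert u (G.neighborFinset u) := by
      rw [heq, hmemC]; exact hr
    rcases Finset.mem_insert.mp hv with rfl | h
    · exact absurd rfl hne
    · exact (SimpleGraph.mem_neighborFinset _ _ _).mp h
  refine ⟨C u₀, hcu0, ?_⟩
  intro u v huv
  constructor
  · intro hadj'
    have hr := hadj'.reachable
    constructor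
    · intro hu; exact (hmemC _ _).mpr (((hmemC _ _).mp hu).trans hr)
    · intro hv; exact (hmemC _ _).mpr (((hmemC _ _).mp hv).trans hr.symm)
  · intro hiff
    by_cases hu : u ∈ C u₀
    · have hv := hiff.mp hu
      exact hkey u v huv (((hmemC _ _).mp hu).symm.trans ((hmemC _ _).mp hv))
    · have hv : v ∉ C u₀ := fun h => hu (hiff.mpr h)
      have hu' : u ∈ C v₀ := (hcover u).resolve_left hu
      have hv' : v ∈ C v₀ := (hcover v).resolve_left hv
      exact hkey u v huv (((hmemC _ _).mp hu').symm.trans ((hmemC _ _).mp hv'))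
end

section
/- Let n > 2 be even. If a graph G on n vertices is the union of n/2 pairwise edge-disjoint perfect matchings and G is bipartite, then G is the complete bipartite graph K_{n/2,n/2}. -/
theorem stmt7 (n : ℕ) (hn : 2 < n) (heven : Even n)
    (M : Fin (n / 2) → SimpleGraph (Fin n))
    (hpm : ∀ i, ∀ v, ∃! w, (M i).Adj v w)
    (hdisj : Pairwise fun i j => Disjoint (M i) (M j))
    (G : SimpleGraph (Fin n)) (hG : G = ⨆ i, M i)
    (hbip : ∃ c : Fin n → Bool, ∀ u v, G.Adj u v → c u ≠ c v) :
    ∃ S : Finset (Fin n), S.card = n / 2 ∧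
      ∀ u v : Fin n, G.Adj u v ↔ ¬ (u ∈ S ↔ v ∈ S) := by
  classical
  obtain ⟨c, hc⟩ := hbip
  choose f hf using hpm
  have hGadj : ∀ u w, G.Adj u w ↔ ∃ i, (M i).Adj u w := by
    subst hG; intro u w; exact SimpleGraph.iSup_adj
  have hinj : ∀ v, Function.Injective (fun i => f i v) := by
    intro v i j hij
    by_contra hne
    have hd : Disjoint (M i) (M j) := hdisj hne
    rw [disjoint_iff] at hd
    simp only at hij
    have hadj : (M i ⊓ M j).Adj v (f j v) := ⟨hij ▸ (hf i v).1, (hf j v).1⟩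
    rw [hd] at hadj
    exact hadj
  set N : Fin n → Finset (Fin n) := fun v => Finset.image (fun i => f i v) Finset.univ with hN
  have hNcard : ∀ v, (N v).card = n / 2 := by
    intro v
    rw [hN]
    rw [Finset.card_image_of_injective _ (hinj v), Finset.card_univ, Fintype.card_fin]
  have hmemN : ∀ v w, w ∈ N v ↔ G.Adj v w := by
    intro v w
    simp only [hN, Finset.mem_image, Finset.mem_univ, true_and]
    rw [hGadj]
    constructor
    · rintro ⟨i, rfl⟩; exact ⟨i, (hf i v).1⟩
    · rintro ⟨i, h⟩; exact ⟨i, ((hf i v).2 w h).symm⟩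
  have hcol : ∀ v w, w ∈ N v → c w ≠ c v := by
    intro v w hw h
    exact hc v w ((hmemN v w).1 hw) h.symm
  set S := Finset.univ.filter (fun v => c v = true) with hS
  set T := Finset.univ.filter (fun v => c v = false) with hT
  have hmemS : ∀ x, x ∈ S ↔ c x = true := by intro x; simp [hS]
  have hmemT : ∀ x, x ∈ T ↔ c x = false := by intro x; simp [hT]
  have hsum : S.card + T.card = n := by
    have := Finset.card_filter_add_card_filter_not
      (s := (Finset.univ : Finset (Fin n))) (p := fun v => c v = true)
    have hTeq : Finset.univ.filter (fun v => ¬ c v = true) = T := by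
      apply Finset.filter_congr
      intro x _
      simp [Bool.not_eq_true]
    rw [hTeq] at this
    simpa using this
  have hi0 : 0 < n / 2 := by omega
  set i0 : Fin (n / 2) := ⟨0, hi0⟩ with hi0def
  have hg : Function.Injective (fun v => f i0 v) := by
    intro v w h
    simp only at h
    have h1 : (M i0).Adj (f i0 v) v := ((hf i0 v).1).symm
    have h2 : (M i0).Adj (f i0 v) w := by
      have := ((hf i0 w).1).symm
      rw [← h] at this
      exact this
    exact ((hf i0 (f i0 v)).2 v h1).trans ((hf i0 (f i0 v)).2 w h2).symm
  have hgmem : ∀ v, f i0 v ∈ N v := by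
    intro v
    simp only [hN, Finset.mem_image, Finset.mem_univ, true_and]
    exact ⟨i0, rfl⟩
  have hST : S.card = T.card := by
    have h1 : S.image (fun v => f i0 v) ⊆ T := by
      intro w hw
      simp only [Finset.mem_image] at hw
      obtain ⟨v, hv, rfl⟩ := hw
      rw [hmemT]
      have := hcol v _ (hgmem v)
      rw [(hmemS v).1 hv] at this
      cases h : c (f i0 v)
      · rfl
      · exact absurd h this
    have h2 : T.image (fun v => f i0 v) ⊆ S := by
      intro w hw
      simp only [Finset.mem_image] at hw
      obtain ⟨v, hv, rfl⟩ := hw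
      rw [hmemS]
      have := hcol v _ (hgmem v)
      rw [(hmemT v).1 hv] at this
      cases h : c (f i0 v)
      · exact absurd h this
      · rfl
    have c1 : S.card ≤ T.card := by
      calc S.card = (S.image (fun v => f i0 v)).card :=
            (Finset.card_image_of_injective _ hg).symm
        _ ≤ T.card := Finset.card_le_card h1
    have c2 : T.card ≤ S.card := by
      calc T.card = (T.image (fun v => f i0 v)).card :=
            (Finset.card_image_of_injective _ hg).symm
        _ ≤ S.card := Finset.card_le_card h2
    omega
  have hScard : S.card = n / 2 := by omega
  have hTcard : T.card = n / 2 := by omega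
  have hNvT : ∀ v, c v = true → N v = T := by
    intro v hv
    apply Finset.eq_of_subset_of_card_le
    · intro w hw
      rw [hmemT]
      have := hcol v w hw
      rw [hv] at this
      cases h : c w
      · rfl
      · exact absurd h this
    · rw [hNcard, hTcard]
  have hNvS : ∀ v, c v = false → N v = S := by
    intro v hv
    apply Finset.eq_of_subset_of_card_le
    · intro w hw
      rw [hmemS]
      have := hcol v w hw
      rw [hv] at this
      cases h : c w
      · exact absurd h this
      · rfl
    · rw [hNcard, hScard]
  refine ⟨S, hScard, ?_⟩
  intro u v
  constructor
  · intro hadj hiff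
    have hne := hc u v hadj
    rw [hmemS, hmemS] at hiff
    cases hu : c u <;> cases hv2 : c v <;> rw [hu, hv2] at hne hiff
    · exact hne rfl
    · exact absurd (hiff.mpr rfl) (by simp)
    · exact absurd (hiff.mp rfl) (by simp)
    · exact hne rfl
  · intro h
    rw [hmemS, hmemS] at h
    have hv' : v ∈ N u := by
      cases hu : c u
      · rw [hNvS u hu, hmemS]
        cases hvv : c v
        · exfalso; apply h; rw [hu, hvv]
        · rfl
      · rw [hNvT u hu, hmemT]
        cases hvv : c v
        · rfl
        · exfalso; apply h; rw [hu, hvv]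
    exact (hmemN u v).1 hv'
end

section
/- Let n ≥ 2 and let A be a symmetric, irreducible, exactly diagonally dominant n×n real matrix. For any index k, the (n-1)×(n-1) principal submatrix A(k) obtained by deleting row and column k from A is nonsingular. -/
open Matrix

theorem stmt10 (n : ℕ) (hn : 1 ≤ n) (A : Matrix (Fin (n + 1)) (Fin (n + 1)) ℝ)
    (hsymm : A.IsSymm)
    (hirr : (SimpleGraph.fromRel fun i j => A i j ≠ 0).Connected)
    (hedd : ∀ i, |A i i| = ∑ j ∈ Finset.univ.erase i, |A i j|)
    (k : Fin (n + 1)) :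
    IsUnit (A.submatrix k.succAbove k.succAbove).det := by
  set σ := k.succAbove with hσ
  rw [isUnit_iff_ne_zero]
  intro hdet
  obtain ⟨x, hx0, hx⟩ := (Matrix.exists_mulVec_eq_zero_iff).2 hdet
  set y : Fin (n + 1) → ℝ := k.insertNth 0 x with hy
  have hyk : y k = 0 := by simp [hy]
  have hyσ : ∀ i, y (σ i) = x i := fun i => by simp [hy, hσ]
  obtain ⟨v0, -, hmax⟩ := Finset.exists_max_image Finset.univ (fun v => |y v|)
    ⟨k, Finset.mem_univ k⟩
  set M := |y v0| with hM
  have hmax' : ∀ v, |y v| ≤ M := fun v => hmax v (Finset.mem_univ v)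
  have hMpos : 0 < M := by
    obtain ⟨i, hi⟩ := Function.ne_iff.1 hx0
    calc (0 : ℝ) < |x i| := abs_pos.2 hi
      _ = |y (σ i)| := by rw [hyσ]
      _ ≤ M := hmax' _
  -- key: if |y v| = M then A v k = 0 and all neighbors w of v have |y w| = M
  have key : ∀ v, |y v| = M → ∀ w, A v w ≠ 0 → |y w| = M := by
    intro v hv
    have hvk : v ≠ k := by
      intro h; rw [h, hyk] at hv; simp [← hv] at hMpos
    obtain ⟨i, hi⟩ := Fin.exists_succAbove_eq hvk
    -- sum over all w of A v w * y w = 0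
    have hsum : ∑ w, A v w * y w = 0 := by
      rw [Fin.sum_univ_succAbove (fun w => A v w * y w) k, hyk, mul_zero, zero_add]
      have := congrFun hx i
      simpa [Matrix.mulVec, dotProduct, hσ, hi, hyσ, hy] using this
    have hsplit : A v v * y v = -∑ w ∈ Finset.univ.erase v, A v w * y w := by
      rw [eq_neg_iff_add_eq_zero, ← Finset.sum_erase_add Finset.univ _ (Finset.mem_univ v)] at *
      linarith [hsum]
    have hineq : |A v v| * M ≤ ∑ w ∈ Finset.univ.erase v, |A v w| * |y w| := by
      calc |A v v| * M = |A v v * y v| := by rw [abs_mul, hv]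
        _ = |∑ w ∈ Finset.univ.erase v, A v w * y w| := by rw [hsplit, abs_neg]
        _ ≤ ∑ w ∈ Finset.univ.erase v, |A v w * y w| := Finset.abs_sum_le_sum_abs _ _
        _ = ∑ w ∈ Finset.univ.erase v, |A v w| * |y w| := by simp [abs_mul]
    have hub : ∑ w ∈ Finset.univ.erase v, |A v w| * M = |A v v| * M := by
      rw [hedd v, Finset.sum_mul]
    have hterms : ∀ w ∈ Finset.univ.erase v, |A v w| * (M - |y w|) = 0 := by
      have hsum0 : ∑ w ∈ Finset.univ.erase v, |A v w| * (M - |y w|) ≤ 0 := by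
        have : ∑ w ∈ Finset.univ.erase v, |A v w| * (M - |y w|)
            = ∑ w ∈ Finset.univ.erase v, |A v w| * M
              - ∑ w ∈ Finset.univ.erase v, |A v w| * |y w| := by
          rw [← Finset.sum_sub_distrib]; congr 1; ext w; ring
        rw [this, hub]; linarith
      have hnn : ∀ w ∈ Finset.univ.erase v, 0 ≤ |A v w| * (M - |y w|) := by
        intro w _
        exact mul_nonneg (abs_nonneg _) (by linarith [hmax' w])
      have hsumeq : ∑ w ∈ Finset.univ.erase v, |A v w| * (M - |y w|) = 0 :=
        le_antisymm hsum0 (Finset.sum_nonneg hnn)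
      exact (Finset.sum_eq_zero_iff_of_nonneg hnn).1 hsumeq
    intro w hw
    by_cases hwv : w = v
    · rw [hwv]; exact hv
    · have := hterms w (Finset.mem_erase.2 ⟨hwv, Finset.mem_univ w⟩)
      rcases mul_eq_zero.1 this with h | h
      · exact absurd (abs_eq_zero.1 h) hw
      · linarith [sub_eq_zero.1 h]
  -- propagate along walks
  set G := SimpleGraph.fromRel fun i j => A i j ≠ 0 with hG
  have prop : ∀ (a b : Fin (n+1)), G.Walk a b → |y a| = M → |y b| = M := by
    intro a b p
    induction p with
    | nil => exact id
    | cons h p ih =>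
      intro ha
      apply ih
      rw [SimpleGraph.fromRel_adj] at h
      rcases h.2 with h2 | h2
      · exact key _ ha _ h2
      · exact key _ ha _ (by rwa [hsymm.apply] at h2)
  obtain ⟨p⟩ := hirr.preconnected v0 k
  have := prop v0 k p rfl
  rw [hyk] at this
  simp [← this] at hMpos
end

section
/- Let A be a symmetric, irreducible, exactly diagonally dominant n×n matrix (n ≥ 2). Then the rank of A is at least n - 1; in particular the nullspace of A has dimension at most 1. -/
open Matrix

theorem stmt11 (n : ℕ) (hn : 2 ≤ n) (A : Matrix (Fin n) (Fin n) ℝ)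
    (hsymm : A.IsSymm)
    (hirr : (SimpleGraph.fromRel fun i j => A i j ≠ 0).Connected)
    (hedd : ∀ i, |A i i| = ∑ j ∈ Finset.univ.erase i, |A i j|) :
    n - 1 ≤ A.rank ∧ Module.finrank ℝ (LinearMap.ker A.mulVecLin) ≤ 1 := by
  have hne : Nonempty (Fin n) := ⟨⟨0, by omega⟩⟩
  set i0 : Fin n := ⟨0, by omega⟩ with hi0
  have key : ∀ z : Fin n → ℝ, A.mulVec z = 0 → z i0 = 0 → z = 0 := by
    intro z hz hz0
    by_contra hzne
    have hun : (Finset.univ : Finset (Fin n)).Nonempty := Finset.univ_nonempty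
    set M := Finset.univ.sup' hun (fun j => |z j|) with hM
    have hle : ∀ j, |z j| ≤ M := fun j => Finset.le_sup' (fun j => |z j|) (Finset.mem_univ j)
    obtain ⟨im, _, him⟩ := Finset.exists_mem_eq_sup' hun (fun j => |z j|)
    have hMpos : 0 < M := by
      rcases Function.ne_iff.mp hzne with ⟨k, hk⟩
      exact lt_of_lt_of_le (abs_pos.mpr hk) (hle k)
    have step : ∀ i, |z i| = M → ∀ j, A i j ≠ 0 → |z j| = M := by
      intro i hi j hAij
      by_cases hji : j = i
      · rw [hji]; exact hi
      have hrow : ∑ k, A i k * z k = 0 := congrFun hz i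
      have hsplit : A i i * z i + ∑ k ∈ Finset.univ.erase i, A i k * z k
          = ∑ k, A i k * z k :=
        Finset.add_sum_erase Finset.univ (fun k => A i k * z k) (Finset.mem_univ i)
      have heq : A i i * z i = -∑ k ∈ Finset.univ.erase i, A i k * z k := by
        rw [hrow] at hsplit; linarith
      have h1 : (∑ k ∈ Finset.univ.erase i, |A i k|) * M
          ≤ ∑ k ∈ Finset.univ.erase i, |A i k| * |z k| := by
        calc (∑ k ∈ Finset.univ.erase i, |A i k|) * M = |A i i| * M := by rw [hedd i]
          _ = |A i i * z i| := by rw [abs_mul, hi]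
          _ = |∑ k ∈ Finset.univ.erase i, A i k * z k| := by rw [heq, abs_neg]
          _ ≤ ∑ k ∈ Finset.univ.erase i, |A i k * z k| := Finset.abs_sum_le_sum_abs _ _
          _ = ∑ k ∈ Finset.univ.erase i, |A i k| * |z k| := by
              simp [abs_mul]
      have h2 : ∑ k ∈ Finset.univ.erase i, |A i k| * (M - |z k|) = 0 := by
        have hub : ∑ k ∈ Finset.univ.erase i, |A i k| * (M - |z k|) ≥ 0 :=
          Finset.sum_nonneg fun k _ =>
            mul_nonneg (abs_nonneg _) (by linarith [hle k])
        have : ∑ k ∈ Finset.univ.erase i, |A i k| * (M - |z k|)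
            = (∑ k ∈ Finset.univ.erase i, |A i k|) * M
              - ∑ k ∈ Finset.univ.erase i, |A i k| * |z k| := by
          rw [Finset.sum_mul, ← Finset.sum_sub_distrib]
          congr 1; ext k; ring
        linarith
      have h3 := (Finset.sum_eq_zero_iff_of_nonneg
        (fun k _ => mul_nonneg (abs_nonneg (A i k)) (by linarith [hle k]))).mp h2
        j (Finset.mem_erase.mpr ⟨hji, Finset.mem_univ j⟩)
      rcases mul_eq_zero.mp h3 with h | h
      · exact absurd (abs_eq_zero.mp h) hAij
      · linarith [hle j]
    have walkprop : ∀ {a b : Fin n}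
        (w : (SimpleGraph.fromRel fun i j => A i j ≠ 0).Walk a b),
        |z a| = M → |z b| = M := by
      intro a b w
      induction w with
      | nil => exact id
      | cons h p ih =>
        intro ha
        apply ih
        rcases (SimpleGraph.fromRel_adj _ _ _).mp h with ⟨hne', h1 | h2⟩
        · exact step _ ha _ h1
        · exact step _ ha _ (by rw [hsymm.apply] at h2; exact h2)
    have hzi0 : |z i0| = M := (hirr im i0).elim fun w => walkprop w him.symm
    rw [hz0, abs_zero] at hzi0
    linarith
  have hker1 : Module.finrank ℝ (LinearMap.ker A.mulVecLin) ≤ 1 := by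
    set f : LinearMap.ker A.mulVecLin →ₗ[ℝ] ℝ :=
      (LinearMap.proj i0).comp (LinearMap.ker A.mulVecLin).subtype with hf
    have hinj : Function.Injective f := by
      intro x y hxy
      have hmem : A.mulVec ((x : Fin n → ℝ) - y) = 0 := by
        have hx := x.2; have hy := y.2
        rw [LinearMap.mem_ker] at hx hy
        rw [A.mulVec_sub]
        simp only [← Matrix.mulVecLin_apply, hx, hy, sub_zero, sub_self]
      have h0 : ((x : Fin n → ℝ) - y) i0 = 0 := by
        simp only [Pi.sub_apply]
        have : (x : Fin n → ℝ) i0 = (y : Fin n → ℝ) i0 := hxy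
        linarith
      have := key _ hmem h0
      exact Subtype.ext (by rwa [sub_eq_zero] at this)
    calc Module.finrank ℝ (LinearMap.ker A.mulVecLin)
        ≤ Module.finrank ℝ ℝ := LinearMap.finrank_le_finrank_of_injective hinj
      _ = 1 := Module.finrank_self ℝ
  refine ⟨?_, hker1⟩
  have hrn := LinearMap.finrank_range_add_finrank_ker A.mulVecLin
  rw [Module.finrank_fin_fun] at hrn
  have : A.rank = Module.finrank ℝ (LinearMap.range A.mulVecLin) := rfl
  omega
end

section
/- Let A be a symmetric, irreducible, exactly diagonally dominant singular n×n matrix (n ≥ 2), and let v ≠ 0 satisfy Av = 0. Then every entry of v is nonzero. -/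
open Matrix

theorem stmt12 (n : ℕ) (hn : 2 ≤ n) (A : Matrix (Fin n) (Fin n) ℝ)
    (hsymm : A.IsSymm)
    (hirr : (SimpleGraph.fromRel fun i j => A i j ≠ 0).Connected)
    (hedd : ∀ i, |A i i| = ∑ j ∈ Finset.univ.erase i, |A i j|)
    (hsing : A.det = 0)
    (v : Fin n → ℝ) (hv : v ≠ 0) (hAv : A *ᵥ v = 0) :
    ∀ i, v i ≠ 0 := by
  have hnpos : 0 < n := by omega
  have : Nonempty (Fin n) := ⟨⟨0, hnpos⟩⟩
  obtain ⟨i0, -, hi0⟩ := Finset.univ.exists_max_image (fun i => |v i|)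
    ⟨⟨0, hnpos⟩, Finset.mem_univ _⟩
  set M := |v i0| with hM
  have hle : ∀ i, |v i| ≤ M := fun i => hi0 i (Finset.mem_univ i)
  have hMpos : 0 < M := by
    rcases lt_or_ge 0 M with h | h
    · exact h
    · exfalso; apply hv; funext i
      have h1 := hle i
      have h2 := abs_nonneg (v i)
      have : |v i| = 0 := le_antisymm (h1.trans h) h2
      exact abs_eq_zero.mp this
  have key : ∀ i, |v i| = M → ∀ j, A i j ≠ 0 → |v j| = M := by
    intro i hi j hAij
    by_cases hji : j = i
    · rwa [hji]
    have h1 : ∑ k, A i k * v k = 0 := by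
      have := congrFun hAv i
      simpa [Matrix.mulVec, dotProduct] using this
    have h2 : A i i * v i + ∑ k ∈ Finset.univ.erase i, A i k * v k = 0 := by
      rw [Finset.add_sum_erase Finset.univ (fun k => A i k * v k) (Finset.mem_univ i)]; exact h1
    have h3 : |A i i| * M ≤ ∑ k ∈ Finset.univ.erase i, |A i k| * |v k| := by
      calc |A i i| * M = |A i i * v i| := by rw [abs_mul, hi]
        _ = |∑ k ∈ Finset.univ.erase i, A i k * v k| := by
            rw [show A i i * v i = -∑ k ∈ Finset.univ.erase i, A i k * v k by linarith]
            exact abs_neg _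
        _ ≤ ∑ k ∈ Finset.univ.erase i, |A i k * v k| :=
            Finset.abs_sum_le_sum_abs _ _
        _ = ∑ k ∈ Finset.univ.erase i, |A i k| * |v k| := by
            simp [abs_mul]
    have h5 : ∑ k ∈ Finset.univ.erase i, |A i k| * M = |A i i| * M := by
      rw [← Finset.sum_mul, ← hedd i]
    have hptle : ∀ k ∈ Finset.univ.erase i, |A i k| * |v k| ≤ |A i k| * M :=
      fun k _ => mul_le_mul_of_nonneg_left (hle k) (abs_nonneg _)
    have heq : ∑ k ∈ Finset.univ.erase i, |A i k| * |v k|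
        = ∑ k ∈ Finset.univ.erase i, |A i k| * M :=
      le_antisymm (Finset.sum_le_sum hptle) (by linarith)
    have hterm := (Finset.sum_eq_sum_iff_of_le hptle).mp heq j
      (Finset.mem_erase.mpr ⟨hji, Finset.mem_univ j⟩)
    have habs : |A i j| ≠ 0 := abs_ne_zero.mpr hAij
    exact mul_left_cancel₀ habs hterm
  set G := SimpleGraph.fromRel fun i j => A i j ≠ 0 with hG
  have step : ∀ a b : Fin n, G.Adj a b → |v a| = M → |v b| = M := by
    intro a b hab ha
    rw [hG, SimpleGraph.fromRel_adj] at hab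
    obtain ⟨hne, h | h⟩ := hab
    · exact key a ha b h
    · refine key a ha b ?_
      have : A b a = A a b := hsymm.apply a b
      rwa [this] at h
  have hwalk : ∀ a b : Fin n, G.Walk a b → |v a| = M → |v b| = M := by
    intro a b w
    induction w with
    | nil => exact id
    | cons h _ ih => intro ha; exact ih (step _ _ h ha)
  have hall : ∀ i, |v i| = M := by
    intro i
    obtain ⟨w⟩ := hirr.preconnected i0 i
    exact hwalk i0 i w rfl
  intro i hcon
  have := hall i
  rw [hcon, abs_zero] at this
  linarith
end

section
/- Let A be a symmetric, irreducible, exactly diagonally dominant singular n×n matrix with Av = 0, v ≠ 0, and let f satisfy vᵀf = 0. Fix k, let be A with its k-th row replaced by vᵀ, and let f̂ be f with its k-th entry replaced by 0. Then the unique solution x* of Âx = f̂ satisfies Ax* = f. -/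
open Matrix

theorem stmt15 (n : ℕ) (hn : 2 ≤ n) (A : Matrix (Fin n) (Fin n) ℝ)
    (hsymm : A.IsSymm)
    (hirr : (SimpleGraph.fromRel fun i j => A i j ≠ 0).Connected)
    (hedd : ∀ i, |A i i| = ∑ j ∈ Finset.univ.erase i, |A i j|)
    (hsing : A.det = 0)
    (v : Fin n → ℝ) (hv : v ≠ 0) (hAv : A *ᵥ v = 0)
    (f : Fin n → ℝ) (hf : v ⬝ᵥ f = 0) (k : Fin n)
    (x : Fin n → ℝ) (hx : (A.updateRow k v) *ᵥ x = Function.update f k 0) :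
    A *ᵥ x = f := by
  classical
  set G := SimpleGraph.fromRel fun i j => A i j ≠ 0 with hG
  -- the maximum of |v|
  set M : ℝ := Finset.univ.sup' ⟨k, Finset.mem_univ k⟩ (fun i => |v i|) with hM
  have hMle : ∀ i, |v i| ≤ M := fun i =>
    Finset.le_sup' (fun i => |v i|) (Finset.mem_univ i)
  have hMpos : 0 < M := by
    obtain ⟨i, hi⟩ := Function.ne_iff.mp hv
    exact lt_of_lt_of_le (abs_pos.mpr hi) (hMle i)
  -- adjacency propagation
  have key : ∀ i, |v i| = M → ∀ j, G.Adj i j → |v j| = M := by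
    intro i hi j hadj
    have hAvi : (A *ᵥ v) i = 0 := by rw [hAv]; rfl
    have hsum : ∑ l, A i l * v l = 0 := hAvi
    have hsplit : A i i * v i + ∑ l ∈ Finset.univ.erase i, A i l * v l = 0 := by
      rw [← Finset.add_sum_erase _ _ (Finset.mem_univ i)] at hsum; exact hsum
    have h1 : |A i i| * M = |∑ l ∈ Finset.univ.erase i, A i l * v l| := by
      have : A i i * v i = -∑ l ∈ Finset.univ.erase i, A i l * v l := by linarith
      rw [← hi, ← abs_mul, this, abs_neg]
    have h2 : |∑ l ∈ Finset.univ.erase i, A i l * v l|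
        ≤ ∑ l ∈ Finset.univ.erase i, |A i l| * |v l| := by
      refine (Finset.abs_sum_le_sum_abs _ _).trans ?_
      apply le_of_eq
      exact Finset.sum_congr rfl fun l _ => abs_mul _ _
    have h3 : ∑ l ∈ Finset.univ.erase i, |A i l| * |v l|
        ≤ ∑ l ∈ Finset.univ.erase i, |A i l| * M := by
      refine Finset.sum_le_sum fun l _ => ?_
      exact mul_le_mul_of_nonneg_left (hMle l) (abs_nonneg _)
    have h4 : ∑ l ∈ Finset.univ.erase i, |A i l| * M = |A i i| * M := by
      rw [← Finset.sum_mul, ← hedd i]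
    have heq : ∑ l ∈ Finset.univ.erase i, |A i l| * |v l|
        = ∑ l ∈ Finset.univ.erase i, |A i l| * M := by
      apply le_antisymm h3
      calc ∑ l ∈ Finset.univ.erase i, |A i l| * M = |A i i| * M := h4
        _ = |∑ l ∈ Finset.univ.erase i, A i l * v l| := h1
        _ ≤ _ := h2
    have hterm : ∀ l ∈ Finset.univ.erase i, |A i l| * |v l| = |A i l| * M := by
      rw [← Finset.sum_eq_sum_iff_of_le]
      · exact heq
      · intro l _; exact mul_le_mul_of_nonneg_left (hMle l) (abs_nonneg _)
    have hne : i ≠ j := hadj.ne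
    have hAij : A i j ≠ 0 := by
      rcases (SimpleGraph.fromRel_adj _ i j).mp hadj with ⟨_, h | h⟩
      · exact h
      · intro hc
        apply h
        rw [← hsymm.apply i j] at hc
        exact hc
    have := hterm j (Finset.mem_erase.mpr ⟨hne.symm, Finset.mem_univ j⟩)
    exact mul_left_cancel₀ (abs_ne_zero.mpr hAij) this
  -- some index attains the max
  obtain ⟨i0, _, hi0⟩ := Finset.exists_mem_eq_sup' (⟨k, Finset.mem_univ k⟩ :
    Finset.univ.Nonempty) (fun i => |v i|)
  have walkprop : ∀ (a b : Fin n) (w : G.Walk a b), |v a| = M → |v b| = M := by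
    intro a b w
    induction w with
    | nil => exact fun h => h
    | cons h p ih => exact fun ha => ih (key _ ha _ h)
  have hall : ∀ j, |v j| = M := fun j => by
    obtain ⟨w⟩ := hirr i0 j
    exact walkprop i0 j w hi0.symm
  have hvk : v k ≠ 0 := fun hc => by
    have := hall k
    rw [hc, abs_zero] at this
    exact absurd this.symm (ne_of_gt hMpos)
  -- v ᵥ* A = 0
  have hvA : v ᵥ* A = 0 := by
    have : Aᵀ *ᵥ v = 0 := by rw [hsymm.eq]; exact hAv
    rwa [Matrix.mulVec_transpose] at this
  -- difference vector
  have hdne : ∀ j, j ≠ k → (A *ᵥ x) j = f j := by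
    intro j hj
    have h1 : ((A.updateRow k v) *ᵥ x) j = (A *ᵥ x) j := by
      simp [Matrix.mulVec, Matrix.updateRow_ne hj]
    have h2 : Function.update f k 0 j = f j := Function.update_of_ne hj _ _
    rw [← h1, hx, h2]
  have hdot : v ⬝ᵥ (A *ᵥ x) = 0 := by
    rw [Matrix.dotProduct_mulVec, hvA, zero_dotProduct]
  have hsum0 : ∑ j, v j * ((A *ᵥ x) j - f j) = 0 := by
    have : ∑ j, v j * ((A *ᵥ x) j - f j)
        = v ⬝ᵥ (A *ᵥ x) - v ⬝ᵥ f := by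
      simp [dotProduct, mul_sub, Finset.sum_sub_distrib]
    rw [this, hdot, hf, sub_zero]
  have hsingle : v k * ((A *ᵥ x) k - f k) = 0 := by
    rw [← hsum0]
    symm
    apply Finset.sum_eq_single_of_mem k (Finset.mem_univ k)
    intro j _ hj
    rw [hdne j hj, sub_self, mul_zero]
  have hk : (A *ᵥ x) k = f k := by
    have := mul_eq_zero.mp hsingle
    rcases this with h | h
    · exact absurd h hvk
    · linarith
  funext j
  by_cases hj : j = k
  · rw [hj]; exact hk
  · exact hdne j hj
end

section
/- Let M be the Laplacian of a connected graph on n vertices with eigenvalues 0 = λ₁ < λ₂ ≤ ... ≤ λ_n ≤ n, let p be a vector with eᵀp = 0, and let r be the solution of Mr = p with eᵀr = 0. Then ‖r - p/n‖ ≤ ‖p‖ (n - λ₂)/(n λ₂) in the Euclidean norm. -/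
open Matrix

theorem stmt18 (n : ℕ) (G : SimpleGraph (Fin n)) [DecidableRel G.Adj]
    (hconn : G.Connected)
    (M : Matrix (Fin n) (Fin n) ℝ) (hM : M = G.lapMatrix ℝ)
    (lam2 : ℝ) (hlam2 : 0 < lam2) (hlam2n : lam2 ≤ n)
    (heig : ∀ (μ : ℝ) (x : Fin n → ℝ), x ≠ 0 → M *ᵥ x = μ • x →
      μ = 0 ∨ (lam2 ≤ μ ∧ μ ≤ n))
    (p r : Fin n → ℝ) (hp : ∑ i, p i = 0)
    (hr : M *ᵥ r = p) (hrsum : ∑ i, r i = 0) :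
    Real.sqrt (∑ i, (r i - p i / n) ^ 2) ≤
      Real.sqrt (∑ i, p i ^ 2) * ((n - lam2) / (n * lam2)) := by
  have hn : (0 : ℝ) < n := lt_of_lt_of_le hlam2 hlam2n
  have hn0 : 0 < n := by exact_mod_cast hn
  set K : ℝ := (↑n - lam2) / (↑n * lam2) with hK
  have hK0 : 0 ≤ K := div_nonneg (by linarith) (by positivity)
  have hA : M.IsHermitian := by rw [hM]; exact (SimpleGraph.posSemidef_lapMatrix ℝ G).1
  have hSymm : Mᵀ = M := by rw [hM]; exact G.isSymm_lapMatrix ℝ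
  set b := hA.eigenvectorBasis with hb
  set μ := hA.eigenvalues with hmu
  -- representation formula
  have hrepr : ∀ (x : EuclideanSpace ℝ (Fin n)) (i : Fin n),
      b.repr x i = ∑ j, b i j * x j := by
    intro x i
    rw [b.repr_apply_apply]
    simp [PiLp.inner_apply, RCLike.inner_apply, conj_trivial]
    exact Finset.sum_congr rfl fun j _ => mul_comm _ _
  set R : EuclideanSpace ℝ (Fin n) := WithLp.toLp 2 r with hR
  set P : EuclideanSpace ℝ (Fin n) := WithLp.toLp 2 p with hP
  set Q : EuclideanSpace ℝ (Fin n) := WithLp.toLp 2 (fun i => r i - p i / n) with hQ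
  -- eigen equations
  have heigen : ∀ i, M *ᵥ ⇑(b i) = μ i • ⇑(b i) := fun i => hA.mulVec_eigenvectorBasis i
  have hPrep : ∀ i, b.repr P i = μ i * b.repr R i := by
    intro i
    calc b.repr P i = ⇑(b i) ⬝ᵥ (M *ᵥ r) := by rw [hrepr P i, hr]; rfl
      _ = (⇑(b i) ᵥ* M) ⬝ᵥ r := by rw [Matrix.dotProduct_mulVec]
      _ = (M *ᵥ ⇑(b i)) ⬝ᵥ r := by rw [← Matrix.mulVec_transpose, hSymm]
      _ = μ i • (⇑(b i) ⬝ᵥ r) := by rw [heigen i, smul_dotProduct]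
      _ = μ i * b.repr R i := by rw [smul_eq_mul, hrepr R i]; rfl
  have hQrep : ∀ i, b.repr Q i = (1 - μ i / n) * b.repr R i := by
    intro i
    have h2 : b.repr Q i = ∑ j, b i j * (r j - p j / n) := hrepr Q i
    have h3 : b.repr R i = ∑ j, b i j * r j := hrepr R i
    have h4 : μ i * b.repr R i = ∑ j, b i j * p j := by rw [← hrepr P i]; exact (hPrep i).symm
    rw [h2]
    have : ∀ j, b i j * (r j - p j / n) = b i j * r j - (b i j * p j) / n := by
      intro j; field_simp
    simp_rw [this, Finset.sum_sub_distrib, ← Finset.sum_div, ← h3, ← h4]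
    field_simp
  -- kernel case: eigenvalue 0 forces zero coefficient
  have hker : ∀ i, μ i = 0 → b.repr R i = 0 := by
    intro i hi
    have h0 : M *ᵥ ⇑(b i) = 0 := by rw [heigen i, hi, zero_smul]
    have hconst : ∀ j k, b i j = b i k := by
      have := (G.lapMatrix_mulVec_eq_zero_iff_forall_reachable (x := ⇑(b i))).mp
        (by rw [← hM, h0])
      exact fun j k => this j k (hconn.preconnected j k)
    have j0 : Fin n := ⟨0, hn0⟩
    calc b.repr R i = ∑ j, b i j * r j := hrepr R i
      _ = ∑ j, b i ⟨0, hn0⟩ * r j := Finset.sum_congr rfl fun j _ => by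
          rw [hconst j ⟨0, hn0⟩]
      _ = b i ⟨0, hn0⟩ * ∑ j, r j := by rw [Finset.mul_sum]
      _ = 0 := by rw [hrsum, mul_zero]
  -- per-coordinate inequality
  have hterm : ∀ i, (b.repr Q i) ^ 2 ≤ K ^ 2 * (b.repr P i) ^ 2 := by
    intro i
    rw [hQrep i, hPrep i]
    rcases heig (μ i) (⇑(b i)) (by
        intro h
        exact b.orthonormal.ne_zero i (by ext j; exact congrFun h j)) (heigen i) with h | ⟨h1, h2⟩
    · rw [hker i h]
      simp
    · have hpos : 0 ≤ 1 - μ i / n := by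
        rw [sub_nonneg, div_le_one hn]; exact h2
      have hle : 1 - μ i / n ≤ K * μ i := by
        rw [hK, div_mul_eq_mul_div, le_div_iff₀ (by positivity)]
        have hmul : 0 ≤ (n : ℝ) * (μ i - lam2) := mul_nonneg hn.le (by linarith)
        have : (1 - μ i / n) * (n * lam2) = (n : ℝ) * lam2 - μ i * lam2 := by
          field_simp
        rw [this]
        nlinarith
      have hsq : (1 - μ i / n) ^ 2 ≤ (K * μ i) ^ 2 := pow_le_pow_left₀ hpos hle 2
      calc ((1 - μ i / n) * b.repr R i) ^ 2 = (1 - μ i / n) ^ 2 * b.repr R i ^ 2 := by ring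
        _ ≤ (K * μ i) ^ 2 * b.repr R i ^ 2 :=
            mul_le_mul_of_nonneg_right hsq (sq_nonneg _)
        _ = K ^ 2 * (μ i * b.repr R i) ^ 2 := by ring
  -- norms via coordinates
  have normsq : ∀ x : EuclideanSpace ℝ (Fin n), ‖x‖ ^ 2 = ∑ i, x i ^ 2 := by
    intro x
    rw [EuclideanSpace.norm_eq, Real.sq_sqrt (by positivity)]
    simp [Real.norm_eq_abs, sq_abs]
  have hQnorm : ‖Q‖ ^ 2 = ∑ i, (b.repr Q i) ^ 2 := by
    rw [← b.repr.norm_map Q]; exact normsq _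
  have hPnorm : ‖P‖ ^ 2 = ∑ i, (b.repr P i) ^ 2 := by
    rw [← b.repr.norm_map P]; exact normsq _
  have hmain : ‖Q‖ ^ 2 ≤ (‖P‖ * K) ^ 2 := by
    rw [hQnorm]
    calc ∑ i, (b.repr Q i) ^ 2 ≤ ∑ i, K ^ 2 * (b.repr P i) ^ 2 :=
          Finset.sum_le_sum fun i _ => hterm i
      _ = K ^ 2 * ∑ i, (b.repr P i) ^ 2 := by rw [Finset.mul_sum]
      _ = (‖P‖ * K) ^ 2 := by rw [← hPnorm]; ring
  have hgoalL : Real.sqrt (∑ i, (r i - p i / n) ^ 2) = ‖Q‖ := by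
    rw [EuclideanSpace.norm_eq]
    congr 1
    exact Finset.sum_congr rfl fun i _ => by
      rw [Real.norm_eq_abs, sq_abs]
  have hgoalR : Real.sqrt (∑ i, p i ^ 2) = ‖P‖ := by
    rw [EuclideanSpace.norm_eq]
    congr 1
    exact Finset.sum_congr rfl fun i _ => by
      rw [Real.norm_eq_abs, sq_abs]
  rw [hgoalL, hgoalR]
  have h5 : 0 ≤ ‖P‖ * K := mul_nonneg (norm_nonneg _) hK0
  nlinarith [norm_nonneg Q]
end
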